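/- arXiv:0801.4587 — 9 statements merged into one kernel-verified Lean document; each statement's English description precedes it below -/
import Mathlib

section
/- Every automorphism of the real associative algebra of quaternions ℍ is inner, i.e., for every algebra automorphism τ : ℍ → ℍ there exists a unit quaternion a ∈ Sp(1) such that τ(x) = a * x * a⁻¹ for all x ∈ ℍ. -/
open Quaternion

noncomputable def qi : Quaternion ℝ := ⟨0,1,0,0⟩
noncomputable def qj : Quaternion ℝ := ⟨0,0,1,0⟩
noncomputable def qk : Quaternion ℝ := ⟨0,0,0,1⟩
@[simp] lemma qi_re : qi.re = 0 := rfl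
@[simp] lemma qi_imI : qi.imI = 1 := rfl
@[simp] lemma qi_imJ : qi.imJ = 0 := rfl
@[simp] lemma qi_imK : qi.imK = 0 := rfl
@[simp] lemma qj_re : qj.re = 0 := rfl
@[simp] lemma qj_imI : qj.imI = 0 := rfl
@[simp] lemma qj_imJ : qj.imJ = 1 := rfl
@[simp] lemma qj_imK : qj.imK = 0 := rfl
@[simp] lemma qk_re : qk.re = 0 := rfl
@[simp] lemma qk_imI : qk.imI = 0 := rfl
@[simp] lemma qk_imJ : qk.imJ = 0 := rfl
@[simp] lemma qk_imK : qk.imK = 1 := rfl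

lemma qi_sq : qi * qi = (-1 : Quaternion ℝ) := by ext <;> simp
lemma qj_sq : qj * qj = (-1 : Quaternion ℝ) := by ext <;> simp
lemma qij : qi * qj = qk := by ext <;> simp
lemma qji : qj * qi = -qk := by ext <;> simp
lemma qj_ne : qj ≠ 0 := by simp [Quaternion.ext_iff]
lemma qi_ne : qi ≠ 0 := by simp [Quaternion.ext_iff]
lemma qdecomp (x : Quaternion ℝ) :
    x = (x.re : Quaternion ℝ) + x.imI • qi + x.imJ • qj + x.imK • qk := by
  ext <;> simp

/-- Every automorphism of the real quaternion algebra is inner, given by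
conjugation with a unit quaternion. -/
theorem stmt0 (τ : Quaternion ℝ ≃ₐ[ℝ] Quaternion ℝ) :
    ∃ a : Quaternion ℝ, ‖a‖ = 1 ∧ ∀ x : Quaternion ℝ, τ x = a * x * a⁻¹ := by
  set i' := τ qi with hi'def
  set j' := τ qj with hj'def
  have hi : i' * i' = -1 := by rw [hi'def, ← map_mul, qi_sq, map_neg, map_one]
  have hj : j' * j' = -1 := by rw [hj'def, ← map_mul, qj_sq, map_neg, map_one]
  have hij : i' * j' = -(j' * i') := by
    rw [hi'def, hj'def, ← map_mul, ← map_mul, ← map_neg, qij, qji, neg_neg]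
  -- Step 1: u conjugating qi to i'
  obtain ⟨u, hu0, hu⟩ : ∃ u : Quaternion ℝ, u ≠ 0 ∧ u * qi = i' * u := by
    by_cases h : i' = -qi
    · refine ⟨qj, qj_ne, ?_⟩
      rw [h, neg_mul, qji, qij]
    · refine ⟨qi + i', fun h0 => h ?_, ?_⟩
      · rw [add_comm] at h0; exact (neg_eq_of_add_eq_zero_left h0).symm
      · rw [add_mul, mul_add, qi_sq, hi, add_comm]
  set j'' : Quaternion ℝ := u⁻¹ * (j' * u) with hj''def
  have hujpp : u * j'' = j' * u := by
    rw [hj''def, ← mul_assoc, mul_inv_cancel₀ hu0, one_mul]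
  have hj''sq : j'' * j'' = -1 := by
    rw [hj''def]
    simp only [← mul_assoc]
    rw [mul_assoc (u⁻¹ * j'), mul_inv_cancel₀ hu0, mul_one, mul_assoc u⁻¹ j' j', hj]
    simp [inv_mul_cancel₀ hu0]
  have hanti : qi * j'' = -(j'' * qi) := by
    apply mul_left_cancel₀ hu0
    calc u * (qi * j'') = i' * (j' * u) := by rw [← mul_assoc, hu, mul_assoc, hujpp]
      _ = -(j' * (i' * u)) := by rw [← mul_assoc, hij, neg_mul, mul_assoc]
      _ = u * -(j'' * qi) := by rw [← hu, ← mul_assoc, ← hujpp, mul_assoc, ← mul_neg]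
  -- Step 2: v commuting with qi and conjugating qj to j''
  obtain ⟨v, hv0, hvj, hvi⟩ : ∃ v : Quaternion ℝ, v ≠ 0 ∧ v * qj = j'' * v ∧ v * qi = qi * v := by
    by_cases h : j'' = -qj
    · exact ⟨qi, qi_ne, by rw [h, neg_mul, qji, qij, neg_neg], rfl⟩
    · refine ⟨1 - j'' * qj, fun h0 => h ?_, ?_, ?_⟩
      · have h1 : j'' * qj = 1 := (sub_eq_zero.mp h0).symm
        have h2 := congrArg (· * qj) h1
        simp only [mul_assoc, qj_sq, mul_neg_one, one_mul] at h2
        exact neg_eq_iff_eq_neg.mp h2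
      · rw [sub_mul, mul_sub, one_mul, mul_one, mul_assoc, qj_sq, ← mul_assoc, hj''sq]
        simp [sub_eq_add_neg, add_comm]
      · rw [sub_mul, mul_sub, one_mul, mul_one]
        congr 1
        rw [mul_assoc, qji, mul_neg, ← mul_assoc qi, hanti, neg_mul, mul_assoc j'', qij]
  -- the conjugating element
  set b : Quaternion ℝ := u * v with hbdef
  have hb0 : b ≠ 0 := mul_ne_zero hu0 hv0
  have hbi : b * qi = i' * b := by
    rw [hbdef, mul_assoc, hvi, ← mul_assoc, hu, mul_assoc]
  have hbj : b * qj = j' * b := by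
    rw [hbdef, mul_assoc, hvj, ← mul_assoc, hujpp, mul_assoc]
  have hbk : b * qk = τ qk * b := by
    have : τ qk = i' * j' := by rw [hi'def, hj'def, ← map_mul, qij]
    rw [this, ← qij, ← mul_assoc, hbi, mul_assoc, hbj, ← mul_assoc]
  have key : ∀ x : Quaternion ℝ, b * x = τ x * b := by
    intro x
    conv_lhs => rw [qdecomp x]
    conv_rhs => rw [qdecomp x]
    simp only [map_add, map_smul, mul_add, add_mul, mul_smul_comm, smul_mul_assoc,
      hbi, hbj, hbk]
    congr 1
    congr 1
    congr 1
    · have : τ ((x.re : ℝ) : Quaternion ℝ) = ((x.re : ℝ) : Quaternion ℝ) := τ.commutes x.re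
      rw [this, ← Quaternion.coe_commutes]
  -- normalize
  refine ⟨‖b‖⁻¹ • b, ?_, ?_⟩
  · rw [norm_smul, norm_inv, norm_norm, inv_mul_cancel₀ (norm_ne_zero_iff.mpr hb0)]
  · intro x
    have hbx : τ x = b * x * b⁻¹ := by
      rw [key x, mul_assoc, mul_inv_cancel₀ hb0, mul_one]
    have hr : (‖b‖ : ℝ) ≠ 0 := norm_ne_zero_iff.mpr hb0
    rw [hbx]
    rw [smul_mul_assoc, smul_mul_assoc]
    rw [show (‖b‖⁻¹ • b)⁻¹ = ‖b‖ • b⁻¹ from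
      inv_eq_of_mul_eq_one_right (by
        rw [smul_mul_assoc, mul_smul_comm, smul_smul, inv_mul_cancel₀ hr,
          mul_inv_cancel₀ hb0, one_smul])]
    rw [mul_smul_comm, smul_smul, inv_mul_cancel₀ hr, one_smul]
end

section
/- Every quaternionic linear map t : ℍ^m → ℍ^n (with respect to the natural linear quaternionic structures given by left ℍ-module multiplication) is of the form t(X) = a · X · A for some quaternion a ∈ ℍ and some m × n matrix A with quaternionic entries, where X ∈ ℍ^m is viewed as a row vector. -/
noncomputable section

def s5qI : Quaternion ℝ := ⟨0,1,0,0⟩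
def s5qJ : Quaternion ℝ := ⟨0,0,1,0⟩
def s5qK : Quaternion ℝ := ⟨0,0,0,1⟩
lemma s5cI : s5qI.re = 0 ∧ s5qI.imI = 1 ∧ s5qI.imJ = 0 ∧ s5qI.imK = 0 := ⟨rfl, rfl, rfl, rfl⟩
lemma s5cJ : s5qJ.re = 0 ∧ s5qJ.imI = 0 ∧ s5qJ.imJ = 1 ∧ s5qJ.imK = 0 := ⟨rfl, rfl, rfl, rfl⟩
lemma s5cK : s5qK.re = 0 ∧ s5qK.imI = 0 ∧ s5qK.imJ = 0 ∧ s5qK.imK = 1 := ⟨rfl, rfl, rfl, rfl⟩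
lemma s5hII : s5qI * s5qI = -1 := by ext <;> simp [s5cI, s5cJ, s5cK, Quaternion.re_mul, Quaternion.imI_mul, Quaternion.imJ_mul, Quaternion.imK_mul, Quaternion.re_one, Quaternion.imI_one, Quaternion.imJ_one, Quaternion.imK_one]
lemma s5hJJ : s5qJ * s5qJ = -1 := by ext <;> simp [s5cI, s5cJ, s5cK, Quaternion.re_mul, Quaternion.imI_mul, Quaternion.imJ_mul, Quaternion.imK_mul, Quaternion.re_one, Quaternion.imI_one, Quaternion.imJ_one, Quaternion.imK_one]
lemma s5hIJ : s5qI * s5qJ = s5qK := by ext <;> simp [s5cI, s5cJ, s5cK, Quaternion.re_mul, Quaternion.imI_mul, Quaternion.imJ_mul, Quaternion.imK_mul, Quaternion.re_one, Quaternion.imI_one, Quaternion.imJ_one, Quaternion.imK_one]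
lemma s5hJI : s5qJ * s5qI = -s5qK := by ext <;> simp [s5cI, s5cJ, s5cK, Quaternion.re_mul, Quaternion.imI_mul, Quaternion.imJ_mul, Quaternion.imK_mul, Quaternion.re_one, Quaternion.imI_one, Quaternion.imJ_one, Quaternion.imK_one]
lemma s5hKI : s5qK * s5qI = s5qJ := by ext <;> simp [s5cI, s5cJ, s5cK, Quaternion.re_mul, Quaternion.imI_mul, Quaternion.imJ_mul, Quaternion.imK_mul, Quaternion.re_one, Quaternion.imI_one, Quaternion.imJ_one, Quaternion.imK_one]
lemma s5hKJ : s5qK * s5qJ = -s5qI := by ext <;> simp [s5cI, s5cJ, s5cK, Quaternion.re_mul, Quaternion.imI_mul, Quaternion.imJ_mul, Quaternion.imK_mul, Quaternion.re_one, Quaternion.imI_one, Quaternion.imJ_one, Quaternion.imK_one]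
lemma s5qI_re : s5qI.re = 0 := rfl
lemma s5qJ_re : s5qJ.re = 0 := rfl
lemma s5normone (a : Quaternion ℝ) (h : Quaternion.normSq a = 1) : ‖a‖ = 1 := by
  have h2 : ‖a‖ * ‖a‖ = 1 := by rw [← Quaternion.normSq_eq_norm_mul_self, h]
  rcases mul_self_eq_one_iff.mp h2 with h3 | h3
  · exact h3
  · have := norm_nonneg a; linarith
lemma s5norm_qI : ‖s5qI‖ = 1 :=
  s5normone _ (by simp [Quaternion.normSq_def', s5cI])
lemma s5norm_qJ : ‖s5qJ‖ = 1 :=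
  s5normone _ (by simp [Quaternion.normSq_def', s5cJ])
lemma s5mulself (a : Quaternion ℝ) (h0 : a.re = 0) (h1 : ‖a‖ = 1) : a * a = -1 := by
  have hn : Quaternion.normSq a = 1 := by rw [Quaternion.normSq_eq_norm_mul_self, h1]; ring
  rw [Quaternion.normSq_def'] at hn
  ext <;> simp [Quaternion.re_mul, Quaternion.imI_mul, Quaternion.imJ_mul, Quaternion.imK_mul, h0, Quaternion.re_one, Quaternion.imI_one, Quaternion.imJ_one, Quaternion.imK_one] <;> nlinarith [hn]
def s5Fq (α β x : Quaternion ℝ) : Quaternion ℝ := x - α*x*s5qI - β*x*s5qJ - α*β*x*s5qK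
lemma s5fixI (α β x : Quaternion ℝ) (hα2 : α*α = -1) : (s5Fq α β x) * s5qI = α * s5Fq α β x := by
  have expand : (s5Fq α β x)*s5qI - α*(s5Fq α β x)
      = (α*α+1)*(x*s5qI) + (α*(α*β)+β)*(x*s5qK) - β*(x*(s5qJ*s5qI + s5qK))
        - (α*β)*(x*(s5qK*s5qI - s5qJ)) - α*(x*(s5qI*s5qI+1)) := by
    unfold s5Fq; noncomm_ring
  have h2 : α*(α*β) = -β := by rw [← mul_assoc, hα2]; noncomm_ring
  rw [hα2, h2, s5hJI, s5hKI, s5hII] at expand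
  simp at expand
  linear_combination (norm := noncomm_ring) expand
lemma s5fixJ (α β x : Quaternion ℝ) (hβ2 : β*β = -1) (hβα : β*α = -(α*β)) :
    (s5Fq α β x) * s5qJ = β * s5Fq α β x := by
  have expand : (s5Fq α β x)*s5qJ - β*(s5Fq α β x)
      = (β*β+1)*(x*s5qJ) + (β*α + α*β)*(x*s5qI) + ((β*α)*β - α)*(x*s5qK)
        - α*(x*(s5qI*s5qJ - s5qK)) - β*(x*(s5qJ*s5qJ+1)) - (α*β)*(x*(s5qK*s5qJ + s5qI)) := by
    unfold s5Fq; noncomm_ring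
  have h3 : (β*α)*β = α := by rw [hβα]; rw [neg_mul, mul_assoc, hβ2]; noncomm_ring
  rw [h3, hβ2, hβα, s5hIJ, s5hJJ, s5hKJ] at expand
  simp at expand
  linear_combination (norm := noncomm_ring) expand
lemma s5trace_id (α β : Quaternion ℝ) :
    (s5Fq α β 1).re + (s5Fq α β s5qI).imI + (s5Fq α β s5qJ).imJ + (s5Fq α β s5qK).imK = 4 := by
  simp [s5Fq, s5cI, s5cJ, s5cK, Quaternion.re_mul, Quaternion.imI_mul, Quaternion.imJ_mul, Quaternion.imK_mul, Quaternion.re_one, Quaternion.imI_one, Quaternion.imJ_one, Quaternion.imK_one]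
  ring
lemma s5qdecomp (p : Quaternion ℝ) :
    p = p.re • (1:Quaternion ℝ) + p.imI • s5qI + p.imJ • s5qJ + p.imK • s5qK := by
  ext <;> simp [s5cI, s5cJ, s5cK, Quaternion.re_one, Quaternion.imI_one, Quaternion.imJ_one, Quaternion.imK_one]

end

set_option maxHeartbeats 1600000

/-- Every quaternionic linear map `t : ℍ^m → ℍ^n` (with respect to the natural
linear quaternionic structures coming from left `ℍ`-multiplication) is of the
form `t(X) = a • (X ⬝ A)` for a quaternion `a` and a quaternionic `m × n`
matrix `A`. -/
theorem stmt5 {m n : ℕ}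
    (t : (Fin m → Quaternion ℝ) →ₗ[ℝ] (Fin n → Quaternion ℝ))
    (T : Quaternion ℝ → Quaternion ℝ)
    (hT : ∀ q : Quaternion ℝ, q.re = 0 → ‖q‖ = 1 → (T q).re = 0 ∧ ‖T q‖ = 1)
    (hq : ∀ q : Quaternion ℝ, q.re = 0 → ‖q‖ = 1 →
      ∀ X : Fin m → Quaternion ℝ, t (q • X) = T q • t X) :
    ∃ (a : Quaternion ℝ) (A : Matrix (Fin m) (Fin n) (Quaternion ℝ)),
      ∀ X : Fin m → Quaternion ℝ, t X = a • Matrix.vecMul X A := by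
  by_cases ht : ∀ X c, t X c = 0
  · refine ⟨0, 0, fun X => ?_⟩
    funext c
    simp [ht X c]
  · push_neg at ht
    obtain ⟨X0, c0, hX0⟩ := ht
    set α := T s5qI with hαdef
    set β := T s5qJ with hβdef
    obtain ⟨hαre, hαnorm⟩ := hT s5qI s5qI_re s5norm_qI
    obtain ⟨hβre, hβnorm⟩ := hT s5qJ s5qJ_re s5norm_qJ
    have hα2 : α * α = -1 := s5mulself α hαre hαnorm
    have hβ2 : β * β = -1 := s5mulself β hβre hβnorm
    have kI : ∀ X, t (s5qI • X) = α • t X := hq s5qI s5qI_re s5norm_qI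
    have kJ : ∀ X, t (s5qJ • X) = β • t X := hq s5qJ s5qJ_re s5norm_qJ
    have kK : ∀ X, t (s5qK • X) = (α * β) • t X := by
      intro X
      rw [← s5hIJ, mul_smul, kI, kJ, smul_smul]
    -- anticommutation
    have hβα : β * α = -(α * β) := by
      have e1 : t ((s5qJ * s5qI) • X0) = (β * α) • t X0 := by
        rw [mul_smul, kJ, kI, smul_smul]
      rw [s5hJI, neg_smul, map_neg, kK, ← neg_smul] at e1
      have := congrFun e1 c0
      simp only [Pi.smul_apply, smul_eq_mul] at this
      exact mul_right_cancel₀ hX0 this.symm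
    -- find a
    have hcand : ∃ a : Quaternion ℝ, a ≠ 0 ∧ a * s5qI = α * a ∧ a * s5qJ = β * a := by
      have h4 := s5trace_id α β
      have : s5Fq α β 1 ≠ 0 ∨ s5Fq α β s5qI ≠ 0 ∨ s5Fq α β s5qJ ≠ 0 ∨ s5Fq α β s5qK ≠ 0 := by
        by_contra hco
        push_neg at hco
        obtain ⟨e1, e2, e3, e4⟩ := hco
        rw [e1, e2, e3, e4] at h4
        norm_num [Quaternion.re_zero, Quaternion.imI_zero, Quaternion.imJ_zero, Quaternion.imK_zero] at h4
      rcases this with h | h | h | h <;>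
        exact ⟨_, h, s5fixI α β _ hα2, s5fixJ α β _ hβ2 hβα⟩
    obtain ⟨a, ha0, haI, haJ⟩ := hcand
    have haK : a * s5qK = (α * β) * a := by
      rw [← s5hIJ, ← mul_assoc, haI, mul_assoc, haJ, ← mul_assoc]
    have inv_rel : ∀ (c γ : Quaternion ℝ), a * c = γ * a → a⁻¹ * γ = c * a⁻¹ := by
      intro c γ h
      have h2 : a⁻¹ * (a * c) * a⁻¹ = a⁻¹ * (γ * a) * a⁻¹ := by rw [h]
      rw [← mul_assoc, inv_mul_cancel₀ ha0, one_mul] at h2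
      rw [mul_assoc, mul_assoc, mul_inv_cancel₀ ha0, mul_one] at h2
      exact h2.symm
    have hiI := inv_rel s5qI α haI
    have hiJ := inv_rel s5qJ β haJ
    have hiK := inv_rel s5qK (α * β) haK
    -- key lemma
    have key : ∀ (p : Quaternion ℝ) X, a⁻¹ • t (p • X) = (p * a⁻¹) • t X := by
      intro p X
      have hdec : p • X = p.re • X + p.imI • (s5qI • X) + p.imJ • (s5qJ • X) + p.imK • (s5qK • X) := by
        conv_lhs => rw [s5qdecomp p]
        rw [add_smul, add_smul, add_smul, smul_assoc, smul_assoc, smul_assoc, smul_assoc, one_smul]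
      have e1 : t (p • X) = p.re • t X + p.imI • t (s5qI • X) + p.imJ • t (s5qJ • X)
          + p.imK • t (s5qK • X) := by
        rw [hdec, map_add, map_add, map_add, t.map_smul, t.map_smul, t.map_smul, t.map_smul]
      rw [e1, kI, kJ, kK, smul_add, smul_add, smul_add,
        smul_comm a⁻¹ p.re, smul_comm a⁻¹ p.imI, smul_comm a⁻¹ p.imJ, smul_comm a⁻¹ p.imK,
        smul_smul a⁻¹ α, smul_smul a⁻¹ β, smul_smul a⁻¹ (α * β), hiI, hiJ, hiK]
      conv_rhs => rw [s5qdecomp p]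
      rw [add_mul, add_mul, add_mul, smul_mul_assoc, smul_mul_assoc, smul_mul_assoc,
        smul_mul_assoc, one_mul, add_smul, add_smul, add_smul,
        smul_assoc, smul_assoc, smul_assoc, smul_assoc]
    refine ⟨a, Matrix.of fun i c =>
      a⁻¹ * t (Pi.single i 1 : Fin m → Quaternion ℝ) c, fun X => ?_⟩
    have hX : X = ∑ i, (X i) • (Pi.single i 1 : Fin m → Quaternion ℝ) := by
      funext j
      rw [Finset.sum_apply]
      simp [Pi.single_apply]
    have step : a⁻¹ • t X
        = ∑ i, ((X i) * a⁻¹) • t (Pi.single i 1 : Fin m → Quaternion ℝ) := by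
      conv_lhs => rw [hX]
      rw [map_sum, Finset.smul_sum]
      exact Finset.sum_congr rfl fun i _ => key (X i) _
    have hfin : t X = a • (a⁻¹ • t X) := by
      rw [smul_smul, mul_inv_cancel₀ ha0, one_smul]
    rw [hfin, step]
    congr 1
    funext c
    simp only [Finset.sum_apply, Pi.smul_apply, smul_eq_mul, Matrix.vecMul, dotProduct,
      Matrix.of_apply]
    exact Finset.sum_congr rfl fun i _ => by rw [mul_assoc]
end

section
/- Let V be a quaternionic vector space with admissible hypercomplex structure ρ, and set E₀ = ρ(1), E₁ = ρ(i), E₂ = ρ(j), E₃ = ρ(k). Define b : V × V → V ⊗ V by b(X,Y) = (1/2) Σ_{i=0}^{3} (E_i(X) ⊗ E_i(Y) + E_i(Y) ⊗ E_i(X)). Then b(X,Y) is invariant under J ⊗ J for every J ∈ Z_V, i.e., (J ⊗ J)(b(X,Y)) = b(X,Y) for all X, Y ∈ V and all admissible complex structures J ∈ Z_V. -/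
set_option maxRecDepth 8000
set_option maxHeartbeats 1000000


open TensorProduct

/-- The projector `b(X,Y) = (1/2) Σᵢ (Eᵢ X ⊗ Eᵢ Y + Eᵢ Y ⊗ Eᵢ X)` onto
Hermitian symmetric 2-tensors, where `E₀ = ρ(1)`, `E₁ = ρ(i)`, `E₂ = ρ(j)`,
`E₃ = ρ(k)`. -/
noncomputable def bForm {V : Type*} [AddCommGroup V] [Module ℝ V]
    (ρ : Quaternion ℝ →ₐ[ℝ] Module.End ℝ V) (X Y : V) : V ⊗[ℝ] V :=
  (2 : ℝ)⁻¹ •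
    (ρ 1 X ⊗ₜ[ℝ] ρ 1 Y + ρ 1 Y ⊗ₜ[ℝ] ρ 1 X +
     (ρ ⟨0,1,0,0⟩ X ⊗ₜ[ℝ] ρ ⟨0,1,0,0⟩ Y + ρ ⟨0,1,0,0⟩ Y ⊗ₜ[ℝ] ρ ⟨0,1,0,0⟩ X) +
     (ρ ⟨0,0,1,0⟩ X ⊗ₜ[ℝ] ρ ⟨0,0,1,0⟩ Y + ρ ⟨0,0,1,0⟩ Y ⊗ₜ[ℝ] ρ ⟨0,0,1,0⟩ X) +
     (ρ ⟨0,0,0,1⟩ X ⊗ₜ[ℝ] ρ ⟨0,0,0,1⟩ Y + ρ ⟨0,0,0,1⟩ Y ⊗ₜ[ℝ] ρ ⟨0,0,0,1⟩ X))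

/-- `b(X,Y)` is invariant under `J ⊗ J` for every admissible complex
structure `J = ρ(q)`, `q` a unit imaginary quaternion. -/
theorem stmt7 {V : Type*} [AddCommGroup V] [Module ℝ V]
    (ρ : Quaternion ℝ →ₐ[ℝ] Module.End ℝ V)
    (q : Quaternion ℝ) (hq : q.re = 0) (hn : ‖q‖ = 1) (X Y : V) :
    TensorProduct.map (ρ q : V →ₗ[ℝ] V) (ρ q : V →ₗ[ℝ] V) (bForm ρ X Y) =
      bForm ρ X Y := by
  set b := q.imI with hb
  set c := q.imJ with hc
  set d := q.imK with hd
  have hq' : q = ⟨0, b, c, d⟩ := by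
    ext <;> simp [hq, hb, hc, hd]
  have hn2 : b ^ 2 + c ^ 2 + d ^ 2 = 1 := by
    have h1 : Quaternion.normSq q = 1 := by
      rw [Quaternion.normSq_eq_norm_mul_self, hn, one_mul]
    rw [Quaternion.normSq_def'] at h1
    rw [hq] at h1
    linarith [h1]
  have hcomp : ∀ (p r : Quaternion ℝ) (v : V), ρ p (ρ r v) = ρ (p * r) v := by
    intro p r v
    rw [map_mul]; rfl
  have hdec : ∀ (w x y z : ℝ) (v : V),
      ρ ⟨w, x, y, z⟩ v = w • ρ 1 v + x • ρ ⟨0,1,0,0⟩ v + y • ρ ⟨0,0,1,0⟩ v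
        + z • ρ ⟨0,0,0,1⟩ v := by
    intro w x y z v
    have h : (⟨w, x, y, z⟩ : Quaternion ℝ)
        = (w • 1 + x • ⟨0,1,0,0⟩ + y • ⟨0,0,1,0⟩ + z • ⟨0,0,0,1⟩ : Quaternion ℝ) := by
      show (⟨w, x, y, z⟩ : QuaternionAlgebra ℝ (-1) 0 (-1))
          = (w • 1 + x • ⟨0,1,0,0⟩ + y • ⟨0,0,1,0⟩ + z • ⟨0,0,0,1⟩ : QuaternionAlgebra ℝ (-1) 0 (-1))
      ext <;> simp
    rw [h]
    simp only [map_add, map_smul, LinearMap.add_apply, LinearMap.smul_apply]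
    erw [map_smul, map_smul, map_smul]
    rfl
  have m1 : (⟨0, b, c, d⟩ * 1 : Quaternion ℝ) = ⟨0, b, c, d⟩ := mul_one _
  have mi : (⟨0, b, c, d⟩ * ⟨0,1,0,0⟩ : Quaternion ℝ) = ⟨-b, 0, d, -c⟩ := by
    show (⟨0, b, c, d⟩ * ⟨0,1,0,0⟩ : QuaternionAlgebra ℝ (-1) 0 (-1)) = ⟨-b, 0, d, -c⟩
    ext <;> simp [Quaternion.re_mul, Quaternion.imI_mul, Quaternion.imJ_mul,
      Quaternion.imK_mul] <;> ring
  have mj : (⟨0, b, c, d⟩ * ⟨0,0,1,0⟩ : Quaternion ℝ) = ⟨-c, -d, 0, b⟩ := by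
    show (⟨0, b, c, d⟩ * ⟨0,0,1,0⟩ : QuaternionAlgebra ℝ (-1) 0 (-1)) = ⟨-c, -d, 0, b⟩
    ext <;> simp [Quaternion.re_mul, Quaternion.imI_mul, Quaternion.imJ_mul,
      Quaternion.imK_mul] <;> ring
  have mk : (⟨0, b, c, d⟩ * ⟨0,0,0,1⟩ : Quaternion ℝ) = ⟨-d, c, -b, 0⟩ := by
    show (⟨0, b, c, d⟩ * ⟨0,0,0,1⟩ : QuaternionAlgebra ℝ (-1) 0 (-1)) = ⟨-d, c, -b, 0⟩
    ext <;> simp [Quaternion.re_mul, Quaternion.imI_mul, Quaternion.imJ_mul,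
      Quaternion.imK_mul] <;> ring
  have Dq : ∀ v : V, ρ ⟨0, b, c, d⟩ v
      = b • ρ ⟨0,1,0,0⟩ v + c • ρ ⟨0,0,1,0⟩ v + d • ρ ⟨0,0,0,1⟩ v := by
    intro v; rw [hdec]; simp only [zero_smul, zero_add]
  have Di : ∀ v : V, ρ ⟨-b, 0, d, -c⟩ v
      = (-b) • ρ 1 v + d • ρ ⟨0,0,1,0⟩ v + (-c) • ρ ⟨0,0,0,1⟩ v := by
    intro v; rw [hdec]; simp only [zero_smul, add_zero]
  have Dj : ∀ v : V, ρ ⟨-c, -d, 0, b⟩ v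
      = (-c) • ρ 1 v + (-d) • ρ ⟨0,1,0,0⟩ v + b • ρ ⟨0,0,0,1⟩ v := by
    intro v; rw [hdec]; simp only [zero_smul, add_zero]
  have Dk : ∀ v : V, ρ ⟨-d, c, -b, 0⟩ v
      = (-d) • ρ 1 v + c • ρ ⟨0,1,0,0⟩ v + (-b) • ρ ⟨0,0,1,0⟩ v := by
    intro v; rw [hdec]; simp only [zero_smul, add_zero]
  unfold bForm
  simp only [map_smul, map_add, TensorProduct.map_tmul, LinearMap.coe_coe]
  have hcomp' : ∀ (p : Quaternion ℝ) (r : QuaternionAlgebra ℝ (-1) 0 (-1)) (v : V), ρ p (ρ r v) = ρ (p * (show Quaternion ℝ from r)) v := fun p r v => hcomp p r v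
  simp only [hcomp, hcomp']
  rw [hq']
  simp only [m1, mi, mj, mk, Dq, Di, Dj, Dk]
  simp only [TensorProduct.tmul_add, TensorProduct.add_tmul,
    TensorProduct.smul_tmul, TensorProduct.tmul_smul, smul_smul, smul_add,
    zero_smul, smul_zero, TensorProduct.zero_tmul, TensorProduct.tmul_zero,
    zero_add, add_zero]
  match_scalars <;>
    first | ring1 | linear_combination (-(2:ℝ)⁻¹) * hn2 | linear_combination (2:ℝ)⁻¹ * hn2
end

section
/- Let V be a quaternionic vector space with admissible quaternionic triple (I,J,K) satisfying the quaternionic identities, and let V^{0,1;I} ⊆ V ⊗ ℂ be the (-i)-eigenspace of the complexification of I. Then for any α ∈ V* and any X, Y ∈ V^{0,1;I}, the contraction ι_α(b(X,Y)) = 0, where b(X,Y) = (1/2)[X⊗Y + Y⊗X + IX⊗IY + IY⊗IX + JX⊗JY + JY⊗JX + KX⊗KY + KY⊗KX] (extended complex-bilinearly) and ι_α contracts the first tensor factor with α. -/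
/-- For an admissible quaternionic triple `(I,J,K)` (complexified) and
`X, Y ∈ V^{0,1;I}`, the contraction `ι_α(b(X,Y))` vanishes for every `α`. -/
theorem stmt8 {V : Type*} [AddCommGroup V] [Module ℂ V]
    (I J K : Module.End ℂ V)
    (hI : I * I = -1) (hJ : J * J = -1) (hK : K * K = -1)
    (hIJK : I * J * K = -1)
    (X Y : V) (hX : I X = (-Complex.I) • X) (hY : I Y = (-Complex.I) • Y)
    (α : V →ₗ[ℂ] ℂ) :
    (2 : ℂ)⁻¹ •
      (α X • Y + α Y • X + α (I X) • I Y + α (I Y) • I X +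
       α (J X) • J Y + α (J Y) • J X + α (K X) • K Y + α (K Y) • K X) = 0 := by
  have hIJ : I * J = K := by
    have h2 : I * J * (K * K) = -K := by
      rw [← mul_assoc, hIJK]; noncomm_ring
    rw [hK] at h2
    have h3 : -(I * J) = -K := by rw [← h2]; noncomm_ring
    exact neg_injective h3
  have hJI : J * I = -K := by
    have hKJ : K * J = -I := by rw [← hIJ, mul_assoc, hJ]; noncomm_ring
    have hKI : K * I = J := by
      have h5 : K * (K * J) = K * (-I) := by rw [hKJ]
      rw [← mul_assoc, hK] at h5
      simpa [neg_one_mul, mul_neg, neg_inj] using h5.symm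
    rw [← hKI, mul_assoc, hI]; noncomm_ring
  have hKX : K X = Complex.I • J X := by
    have h6 := congrArg (fun f : Module.End ℂ V => f X) hJI
    simp only [Module.End.mul_apply, LinearMap.neg_apply] at h6
    rw [hX, map_smul] at h6
    rw [neg_smul] at h6
    exact (neg_injective h6).symm
  have hKY : K Y = Complex.I • J Y := by
    have h6 := congrArg (fun f : Module.End ℂ V => f Y) hJI
    simp only [Module.End.mul_apply, LinearMap.neg_apply] at h6
    rw [hY, map_smul] at h6
    rw [neg_smul] at h6
    exact (neg_injective h6).symm
  rw [hX, hY, hKX, hKY]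
  simp only [map_smul, smul_smul, smul_eq_mul]
  match_scalars <;> (ring_nf; simp [Complex.I_sq]; try ring_nf)
end

section
/- Let V be a quaternionic vector space, I, J, K an admissible quaternionic triple, X ∈ V^{1,0;J} (the i-eigenspace of J on V⊗ℂ) and Y ∈ V^{0,1;J} (the (-i)-eigenspace). Then for any α ∈ V*, ι_α(b(X,Y)) = α(X)Y + α(Y)X + α(KX)KY + α(KY)KX. -/
/-- For an admissible quaternionic triple `(I,J,K)` (complexified),
`X ∈ V^{1,0;J}` and `Y ∈ V^{0,1;J}`, the contraction `ι_α(b(X,Y))` equals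
`α(X)Y + α(Y)X + α(KX)KY + α(KY)KX`. -/
theorem stmt9 {V : Type*} [AddCommGroup V] [Module ℂ V]
    (I J K : Module.End ℂ V)
    (hI : I * I = -1) (hJ : J * J = -1) (hK : K * K = -1)
    (hIJK : I * J * K = -1)
    (X Y : V) (hX : J X = Complex.I • X) (hY : J Y = (-Complex.I) • Y)
    (α : V →ₗ[ℂ] ℂ) :
    (2 : ℂ)⁻¹ •
      (α X • Y + α Y • X + α (I X) • I Y + α (I Y) • I X +
       α (J X) • J Y + α (J Y) • J X + α (K X) • K Y + α (K Y) • K X) =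
    α X • Y + α Y • X + α (K X) • K Y + α (K Y) • K X := by
  have hIJ : I * J = K := by
    have h1 : (I * J) * (K * K) = -K := by rw [← mul_assoc, hIJK]; simp
    rw [hK, mul_neg_one] at h1
    exact neg_injective h1
  have hKX : K X = Complex.I • I X := by
    have := congrArg (fun f : Module.End ℂ V => f X) hIJ
    simp only [Module.End.mul_apply] at this
    rw [hX, map_smul] at this
    exact this.symm
  have hKY : K Y = (-Complex.I) • I Y := by
    have := congrArg (fun f : Module.End ℂ V => f Y) hIJ
    simp only [Module.End.mul_apply] at this
    rw [hY, map_smul] at this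
    exact this.symm
  rw [hX, hY, hKX, hKY]
  simp only [map_smul, smul_eq_mul, smul_smul, smul_add]
  match_scalars <;> (ring_nf; simp [Complex.I_sq]; try ring)
end

section
/- Let V, W be quaternionic vector spaces, T : Z_V → Z_W an orientation-preserving isometry (extended to a linear isometry Q_V → Q_W), and (I,J,K) a positive orthonormal basis of Q_V. Define the ℝ-linear operator C_T on Hom_ℝ(V,W) by C_T(t) = T(I) ∘ t ∘ I + T(J) ∘ t ∘ J + T(K) ∘ t ∘ K. Then C_T is independent of the choice of positive orthonormal basis (I,J,K) of Q_V. -/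
/-- The operator `C_T(t) = Σᵢ T(Eᵢ) ∘ t ∘ Eᵢ` does not depend on the choice
of positive orthonormal basis `(E₀,E₁,E₂)` of `Q_V`: two such bases are
related by a rotation `R ∈ SO(3)`, and since `T` is a linear isometry the
corresponding bases of `Q_W` are related by the same `R`. -/
theorem stmt10 {V W : Type*} [AddCommGroup V] [Module ℝ V]
    [AddCommGroup W] [Module ℝ W]
    (E E' : Fin 3 → Module.End ℝ V) (F F' : Fin 3 → Module.End ℝ W)
    (hE2 : ∀ i, E i * E i = -1) (hE : E 0 * E 1 * E 2 = -1)
    (hE'2 : ∀ i, E' i * E' i = -1) (hE' : E' 0 * E' 1 * E' 2 = -1)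
    (hF2 : ∀ i, F i * F i = -1) (hF : F 0 * F 1 * F 2 = -1)
    (hF'2 : ∀ i, F' i * F' i = -1) (hF' : F' 0 * F' 1 * F' 2 = -1)
    (R : Matrix (Fin 3) (Fin 3) ℝ)
    (hR : R.transpose * R = 1) (hdet : R.det = 1)
    (hrelE : ∀ i, E' i = ∑ j, R i j • E j)
    (hrelF : ∀ i, F' i = ∑ j, R i j • F j)
    (t : V →ₗ[ℝ] W) :
    ∑ i, (F i : W →ₗ[ℝ] W) ∘ₗ t ∘ₗ (E i : V →ₗ[ℝ] V) =
      ∑ i, (F' i : W →ₗ[ℝ] W) ∘ₗ t ∘ₗ (E' i : V →ₗ[ℝ] V) := by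
  have key : ∀ j k, ∑ i, R i j * R i k = if j = k then (1:ℝ) else 0 := by
    intro j k
    have h := congrArg (fun M => M j k) hR
    simpa [Matrix.mul_apply, Matrix.transpose_apply, Matrix.one_apply] using h
  symm
  calc ∑ i, (F' i : W →ₗ[ℝ] W) ∘ₗ t ∘ₗ (E' i : V →ₗ[ℝ] V)
      = ∑ i, ∑ j, ∑ k, (R i j * R i k) • ((F j : W →ₗ[ℝ] W) ∘ₗ t ∘ₗ (E k : V →ₗ[ℝ] V)) := by
        refine Finset.sum_congr rfl fun i _ => ?_
        rw [hrelE, hrelF]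
        ext v
        simp [LinearMap.sum_apply, Finset.sum_apply, map_sum, Finset.smul_sum, smul_smul,
          mul_comm]
    _ = ∑ j, ∑ k, (∑ i, R i j * R i k) • ((F j : W →ₗ[ℝ] W) ∘ₗ t ∘ₗ (E k : V →ₗ[ℝ] V)) := by
        rw [Finset.sum_comm]
        refine Finset.sum_congr rfl fun j _ => ?_
        rw [Finset.sum_comm]
        refine Finset.sum_congr rfl fun k _ => ?_
        rw [Finset.sum_smul]
    _ = ∑ j, (F j : W →ₗ[ℝ] W) ∘ₗ t ∘ₗ (E j : V →ₗ[ℝ] V) := by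
        simp [key, Finset.sum_ite_eq]
end

section
/- With V, W quaternionic vector spaces and T : Z_V → Z_W an orientation-preserving isometry, the operator C_T(t) = T(I)∘t∘I + T(J)∘t∘J + T(K)∘t∘K on Hom_ℝ(V,W) (with (I,J,K) a positive orthonormal basis of Q_V) satisfies the quadratic equation C_T² + 2 C_T - 3·Id = 0. -/
lemma quat_prods {R : Type*} [Ring R] {I J K : R}
    (hI : I*I = -1) (hJ : J*J = -1) (hK : K*K = -1) (hIJK : I*J*K = -1) :
    I*J = K ∧ J*I = -K ∧ J*K = I ∧ K*J = -I ∧ K*I = J ∧ I*K = -J := by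
  have hIJ : I*J = K := by
    have h := congrArg (· * K) hIJK
    simp only [mul_assoc (I*J), hK, mul_neg_one, neg_one_mul] at h
    exact neg_inj.mp h
  have hKJ : K*J = -I := by
    have h := congrArg (· * J) hIJ
    simp only [mul_assoc, hJ, mul_neg_one] at h
    exact h.symm
  have hIK : I*K = -J := by
    have h := congrArg (I * ·) hIJ
    simp only [← mul_assoc, hI, neg_one_mul] at h
    exact h.symm
  have hKI : K*I = J := by
    have h := congrArg (K * ·) hKJ
    simp only [← mul_assoc, hK, neg_one_mul, mul_neg] at h
    exact (neg_inj.mp h).symm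
  have hJK : J*K = I := by
    have h := congrArg (· * K) hIK
    simp only [mul_assoc, hK, mul_neg_one, neg_mul] at h
    exact (neg_inj.mp h).symm
  have hJI : J*I = -K := by
    have h := congrArg (· * I) hKI
    simp only [mul_assoc, hI, mul_neg_one] at h
    exact h.symm
  exact ⟨hIJ, hJI, hJK, hKJ, hKI, hIK⟩

/-- The operator `C_T(t) = T(I)∘t∘I + T(J)∘t∘J + T(K)∘t∘K`. -/
def fueterOp {V W : Type*} [AddCommGroup V] [Module ℝ V]
    [AddCommGroup W] [Module ℝ W]
    (I J K : Module.End ℝ V) (I' J' K' : Module.End ℝ W)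
    (t : V →ₗ[ℝ] W) : V →ₗ[ℝ] W :=
  (I' : W →ₗ[ℝ] W) ∘ₗ t ∘ₗ (I : V →ₗ[ℝ] V) +
  (J' : W →ₗ[ℝ] W) ∘ₗ t ∘ₗ (J : V →ₗ[ℝ] V) +
  (K' : W →ₗ[ℝ] W) ∘ₗ t ∘ₗ (K : V →ₗ[ℝ] V)

/-- `C_T` satisfies the quadratic equation `C_T² + 2 C_T - 3 = 0`. -/
theorem stmt11 {V W : Type*} [AddCommGroup V] [Module ℝ V]
    [AddCommGroup W] [Module ℝ W]
    (I J K : Module.End ℝ V) (I' J' K' : Module.End ℝ W)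
    (hI : I * I = -1) (hJ : J * J = -1) (hK : K * K = -1) (hIJK : I * J * K = -1)
    (hI' : I' * I' = -1) (hJ' : J' * J' = -1) (hK' : K' * K' = -1)
    (hIJK' : I' * J' * K' = -1)
    (t : V →ₗ[ℝ] W) :
    fueterOp I J K I' J' K' (fueterOp I J K I' J' K' t) +
      (2 : ℝ) • fueterOp I J K I' J' K' t - (3 : ℝ) • t = 0 := by
  obtain ⟨hIJ, hJI, hJK, hKJ, hKI, hIK⟩ := quat_prods hI hJ hK hIJK
  obtain ⟨hIJ', hJI', hJK', hKJ', hKI', hIK'⟩ := quat_prods hI' hJ' hK' hIJK'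
  have key : ∀ (A B : Module.End ℝ W) (C D : Module.End ℝ V),
      (A : W →ₗ[ℝ] W) ∘ₗ ((B : W →ₗ[ℝ] W) ∘ₗ t ∘ₗ (C : V →ₗ[ℝ] V)) ∘ₗ (D : V →ₗ[ℝ] V)
        = ((A*B : Module.End ℝ W) : W →ₗ[ℝ] W) ∘ₗ t ∘ₗ ((C*D : Module.End ℝ V) : V →ₗ[ℝ] V) :=
    fun _ _ _ _ => rfl
  simp only [fueterOp, LinearMap.comp_add, LinearMap.add_comp, key,
    hIJ, hJI, hJK, hKJ, hKI, hIK, hI, hJ, hK,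
    hIJ', hJI', hJK', hKJ', hKI', hIK', hI', hJ', hK']
  simp only [LinearMap.neg_comp, LinearMap.comp_neg, Module.End.one_eq_id,
    LinearMap.id_comp, LinearMap.comp_id, neg_neg]
  module
end

section
/- Let V, W be quaternionic vector spaces, T : Q_V → Q_W an orientation-preserving linear isometry, and d ⊆ Q_V a line through the origin with S_d : Q_V → Q_V the orthogonal symmetry (reflection) in d. Then every linear map t : V → W that is quaternionic with respect to T ∘ S_d is Fueter-quaternionic with respect to T, i.e., 𝒬_{T∘S_d} ⊆ ℱ_T. -/
/-- `𝒬_{T∘S_d} ⊆ ℱ_T`: a map that is quaternionic with respect to `T ∘ S_d`,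
where `S_d` is the reflection in a line `d ⊆ Q_V`, is Fueter-quaternionic with
respect to `T`. Here the positive orthonormal basis `(I,J,K)` of `Q_V` is
chosen with `I` spanning `d`, so that `S_d(I) = I`, `S_d(J) = -J`,
`S_d(K) = -K`, and `(I',J',K') = (T(I),T(J),T(K))`. -/
theorem stmt13 {V W : Type*} [AddCommGroup V] [Module ℝ V]
    [AddCommGroup W] [Module ℝ W]
    (I J K : Module.End ℝ V) (I' J' K' : Module.End ℝ W)
    (hI : I * I = -1) (hJ : J * J = -1) (hK : K * K = -1) (hIJK : I * J * K = -1)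
    (hI' : I' * I' = -1) (hJ' : J' * J' = -1) (hK' : K' * K' = -1)
    (hIJK' : I' * J' * K' = -1)
    (t : V →ₗ[ℝ] W)
    (h1 : t ∘ₗ (I : V →ₗ[ℝ] V) = (I' : W →ₗ[ℝ] W) ∘ₗ t)
    (h2 : t ∘ₗ (J : V →ₗ[ℝ] V) = -((J' : W →ₗ[ℝ] W) ∘ₗ t))
    (h3 : t ∘ₗ (K : V →ₗ[ℝ] V) = -((K' : W →ₗ[ℝ] W) ∘ₗ t)) :
    fueterOp I J K I' J' K' t = t := by
  unfold fueterOp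
  ext x
  have e1 := congrArg (fun f => I' ∘ₗ f) h1
  have e2 := congrArg (fun f => J' ∘ₗ f) h2
  have e3 := congrArg (fun f => K' ∘ₗ f) h3
  simp only [LinearMap.comp_neg] at e2 e3
  have q1 : (I' : W →ₗ[ℝ] W) ∘ₗ (I' : W →ₗ[ℝ] W) ∘ₗ t = -t := by
    rw [← LinearMap.comp_assoc]
    show ((I' * I' : Module.End ℝ W) : W →ₗ[ℝ] W) ∘ₗ t = -t
    rw [hI']; ext y; simp
  have q2 : (J' : W →ₗ[ℝ] W) ∘ₗ (J' : W →ₗ[ℝ] W) ∘ₗ t = -t := by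
    rw [← LinearMap.comp_assoc]
    show ((J' * J' : Module.End ℝ W) : W →ₗ[ℝ] W) ∘ₗ t = -t
    rw [hJ']; ext y; simp
  have q3 : (K' : W →ₗ[ℝ] W) ∘ₗ (K' : W →ₗ[ℝ] W) ∘ₗ t = -t := by
    rw [← LinearMap.comp_assoc]
    show ((K' * K' : Module.End ℝ W) : W →ₗ[ℝ] W) ∘ₗ t = -t
    rw [hK']; ext y; simp
  have f1 : (I' : W →ₗ[ℝ] W) ∘ₗ t ∘ₗ (I : V →ₗ[ℝ] V) = -t := by
    rw [h1]; exact q1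
  have f2 : (J' : W →ₗ[ℝ] W) ∘ₗ t ∘ₗ (J : V →ₗ[ℝ] V) = t := by
    rw [h2, LinearMap.comp_neg, q2, neg_neg]
  have f3 : (K' : W →ₗ[ℝ] W) ∘ₗ t ∘ₗ (K : V →ₗ[ℝ] V) = t := by
    rw [h3, LinearMap.comp_neg, q3, neg_neg]
  rw [f1, f2, f3]
  simp
end

section
/- Let U, V, W be quaternionic vector spaces, T' : Q_U → Q_V and T'' : Q_V → Q_W orientation-preserving linear isometries, d ⊆ Q_V a line through the origin, and S_d the reflection of Q_V in d. If t' : U → V is linear quaternionic with respect to S_d ∘ T' and t'' : V → W is linear quaternionic with respect to T'' ∘ S_d, then t'' ∘ t' is Fueter-quaternionic with respect to T'' ∘ T' if and only if t'' ∘ t' = 0. -/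
/-- If `t' : U → V` is quaternionic with respect to `S_d ∘ T'` and
`t'' : V → W` is quaternionic with respect to `T'' ∘ S_d`, then `t'' ∘ t'` is
Fueter-quaternionic with respect to `T'' ∘ T'` if and only if `t'' ∘ t' = 0`.
Bases are chosen so that `(I,J,K) = (T'(I₀),T'(J₀),T'(K₀))` with `I` spanning
`d`, and `(I',J',K') = (T''(I),T''(J),T''(K))`; the reflection `S_d` fixes `I`
and negates `J`, `K`. -/
theorem stmt14 {U V W : Type*} [AddCommGroup U] [Module ℝ U]
    [AddCommGroup V] [Module ℝ V] [AddCommGroup W] [Module ℝ W]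
    (I₀ J₀ K₀ : Module.End ℝ U) (I J K : Module.End ℝ V)
    (I' J' K' : Module.End ℝ W)
    (hI₀ : I₀ * I₀ = -1) (hJ₀ : J₀ * J₀ = -1) (hK₀ : K₀ * K₀ = -1)
    (hIJK₀ : I₀ * J₀ * K₀ = -1)
    (hI : I * I = -1) (hJ : J * J = -1) (hK : K * K = -1) (hIJK : I * J * K = -1)
    (hI' : I' * I' = -1) (hJ' : J' * J' = -1) (hK' : K' * K' = -1)
    (hIJK' : I' * J' * K' = -1)
    (t' : U →ₗ[ℝ] V) (t'' : V →ₗ[ℝ] W)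
    (h1 : t' ∘ₗ (I₀ : U →ₗ[ℝ] U) = (I : V →ₗ[ℝ] V) ∘ₗ t')
    (h2 : t' ∘ₗ (J₀ : U →ₗ[ℝ] U) = -((J : V →ₗ[ℝ] V) ∘ₗ t'))
    (h3 : t' ∘ₗ (K₀ : U →ₗ[ℝ] U) = -((K : V →ₗ[ℝ] V) ∘ₗ t'))
    (g1 : t'' ∘ₗ (I : V →ₗ[ℝ] V) = (I' : W →ₗ[ℝ] W) ∘ₗ t'')
    (g2 : t'' ∘ₗ (J : V →ₗ[ℝ] V) = -((J' : W →ₗ[ℝ] W) ∘ₗ t''))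
    (g3 : t'' ∘ₗ (K : V →ₗ[ℝ] V) = -((K' : W →ₗ[ℝ] W) ∘ₗ t'')) :
    fueterOp I₀ J₀ K₀ I' J' K' (t'' ∘ₗ t') = t'' ∘ₗ t' ↔ t'' ∘ₗ t' = 0 := by
  have hs : fueterOp I₀ J₀ K₀ I' J' K' (t'' ∘ₗ t') = (-3 : ℝ) • (t'' ∘ₗ t') := by
    ext u
    have a1 := LinearMap.congr_fun h1 u
    have a2 := LinearMap.congr_fun h2 u
    have a3 := LinearMap.congr_fun h3 u
    have b1 := fun v => LinearMap.congr_fun g1 v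
    have b2 := fun v => LinearMap.congr_fun g2 v
    have b3 := fun v => LinearMap.congr_fun g3 v
    simp only [LinearMap.comp_apply, LinearMap.neg_apply] at a1 a2 a3 b1 b2 b3
    have c1 : ∀ x : W, I' (I' x) = -x := fun x => by
      have := DFunLike.congr_fun hI' x
      simpa [Module.End.mul_apply] using this
    have c2 : ∀ x : W, J' (J' x) = -x := fun x => by
      have := DFunLike.congr_fun hJ' x
      simpa [Module.End.mul_apply] using this
    have c3 : ∀ x : W, K' (K' x) = -x := fun x => by
      have := DFunLike.congr_fun hK' x
      simpa [Module.End.mul_apply] using this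
    simp only [fueterOp, LinearMap.add_apply, LinearMap.comp_apply,
      LinearMap.smul_apply, a1, a2, a3, b1, b2, b3,
      map_neg, c1, c2, c3]
    module
  rw [hs]
  constructor
  · intro h
    have h4 : (4 : ℝ) • (t'' ∘ₗ t') = 0 := by
      linear_combination (norm := module) -h
    have := smul_eq_zero.mp h4
    simpa using this
  · intro h
    rw [h]; simp
end
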